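/- Let D ⊂ ℂⁿ be a bounded domain and let f : D → D be a holomorphic map such that the closure of f(D) is a compact subset of D, and let z₀ ∈ D be its unique fixed point. Then the linear map id − df_{z₀} : ℂⁿ → ℂⁿ is invertible. -/

import Mathlib

/-- If `f` is a holomorphic self-map of a bounded domain `D ⊆ ℂⁿ` with relatively
compact image and `z₀ ∈ D` is its (unique) fixed point, then `id − df_{z₀}` is an
invertible linear map of ℂⁿ. -/
theorem id_sub_differential_invertible (n : ℕ) (D : Set (Fin n → ℂ))
    (hDopen : IsOpen D) (hDconn : IsConnected D) (hDbdd : Bornology.IsBounded D)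
    (f : (Fin n → ℂ) → (Fin n → ℂ))
    (hf : DifferentiableOn ℂ f D) (hmaps : Set.MapsTo f D D)
    (hcpt : IsCompact (closure (f '' D))) (hsub : closure (f '' D) ⊆ D)
    (z₀ : Fin n → ℂ) (hz₀ : z₀ ∈ D) (hfix : f z₀ = z₀)
    (huniq : ∀ z ∈ D, f z = z → z = z₀) :
    Function.Bijective
      (ContinuousLinearMap.id ℂ (Fin n → ℂ) - fderiv ℂ f z₀) := by
  set A := fderiv ℂ f z₀ with hAdef
  have hAd : HasFDerivAt f A z₀ :=
    (hf.differentiableAt (hDopen.mem_nhds hz₀)).hasFDerivAt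
  obtain ⟨ε, εpos, hε⟩ := hcpt.exists_thickening_subset_open hDopen hsub
  obtain ⟨R, hR⟩ := hDbdd.subset_ball z₀
  have hRpos : 0 < R := by
    have := hR hz₀
    simpa using this
  obtain ⟨r, rpos, hr⟩ := Metric.isOpen_iff.mp hDopen z₀ hz₀
  set δ : ℝ := ε / (2 * R) with hδdef
  have δpos : 0 < δ := div_pos εpos (by positivity)
  set h : (Fin n → ℂ) → (Fin n → ℂ) := fun z => f z + (δ : ℂ) • (f z - z₀) with hhdef
  have hfixh : h z₀ = z₀ := by simp [hhdef, hfix]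
  have hmapsh : Set.MapsTo h D D := by
    intro z hz
    apply hε
    rw [Metric.mem_thickening_iff]
    refine ⟨f z, subset_closure (Set.mem_image_of_mem f hz), ?_⟩
    have h1 : dist (h z) (f z) = δ * ‖f z - z₀‖ := by
      simp [hhdef, dist_eq_norm, norm_smul, abs_of_pos δpos]
    have h2 : ‖f z - z₀‖ < R := by
      have := hR (hmaps hz)
      simpa [Metric.mem_ball, dist_eq_norm] using this
    have h3 : δ * ‖f z - z₀‖ ≤ δ * R := by nlinarith [norm_nonneg (f z - z₀)]
    have h4 : δ * R = ε / 2 := by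
      rw [hδdef]; field_simp
    rw [h1]
    calc δ * ‖f z - z₀‖ ≤ δ * R := h3
      _ = ε / 2 := h4
      _ < ε := half_lt_self εpos
  have hdiffh : DifferentiableOn ℂ h D :=
    hf.add ((hf.sub_const z₀).const_smul ((δ : ℂ)))
  set B : (Fin n → ℂ) →L[ℂ] (Fin n → ℂ) := A + (δ : ℂ) • A with hBdef
  have hB : HasFDerivAt h B z₀ :=
    hAd.add ((hAd.sub_const z₀).const_smul ((δ : ℂ)))
  have hBk : ∀ k : ℕ, HasFDerivAt h^[k] (B ^ k) z₀ := fun k => hB.iterate hfixh k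
  have hdk : ∀ k : ℕ, DifferentiableOn ℂ h^[k] D := by
    intro k
    induction k with
    | zero => simpa using differentiableOn_id
    | succ k ih =>
        rw [Function.iterate_succ']
        exact hdiffh.comp ih (hmapsh.iterate k)
  have key : ∀ v, A v = v → v = 0 := by
    intro v hv
    by_contra hv0
    have hvpos : 0 < ‖v‖ := norm_pos_iff.mpr hv0
    have hBv : ∀ k : ℕ, (B ^ k) v = ((1 : ℂ) + δ) ^ k • v := by
      intro k
      induction k with
      | zero => simp
      | succ k ih =>
          have h1 : B v = ((1 : ℂ) + δ) • v := by
            simp [hBdef, ContinuousLinearMap.add_apply, ContinuousLinearMap.smul_apply, hv,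
              add_smul, one_smul]
          rw [pow_succ, ContinuousLinearMap.mul_apply, h1, map_smul, ih, smul_smul, ← pow_succ']
    have hr₁pos : 0 < r / ‖v‖ := div_pos rpos hvpos
    have hmem : ∀ t : ℂ, t ∈ Metric.ball (0 : ℂ) (r / ‖v‖) → z₀ + t • v ∈ D := by
      intro t ht
      apply hr
      rw [Metric.mem_ball, dist_eq_norm]
      have ht' : ‖t‖ < r / ‖v‖ := by simpa using ht
      have : ‖z₀ + t • v - z₀‖ = ‖t‖ * ‖v‖ := by
        rw [add_sub_cancel_left, norm_smul]
      rw [this]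
      calc ‖t‖ * ‖v‖ < (r / ‖v‖) * ‖v‖ := by
            exact mul_lt_mul_of_pos_right ht' hvpos
        _ = r := by field_simp
    have bound : ∀ k : ℕ, (1 + δ) ^ k * ‖v‖ ≤ R / (r / ‖v‖) := by
      intro k
      set φ : ℂ → (Fin n → ℂ) := fun t => h^[k] (z₀ + t • v) with hφdef
      have hφ0 : φ 0 = z₀ := by
        simp [hφdef, Function.iterate_fixed hfixh k]
      have hφdiff : DifferentiableOn ℂ φ (Metric.ball 0 (r / ‖v‖)) := by
        apply (hdk k).comp
        · exact (((differentiable_id.smul_const v).const_add z₀)).differentiableOn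
        · exact fun t ht => hmem t ht
      have hφmaps : Set.MapsTo φ (Metric.ball 0 (r / ‖v‖)) (Metric.ball (φ 0) R) := by
        intro t ht
        rw [hφ0]
        exact hR ((hmapsh.iterate k) (hmem t ht))
      have hSch := Complex.norm_deriv_le_div_of_mapsTo_ball hφdiff (hφmaps.mono_right Metric.ball_subset_closedBall) hr₁pos
      have hd : HasDerivAt φ ((B ^ k) v) 0 := by
        have hl : HasDerivAt (fun t : ℂ => z₀ + t • v) v 0 := by
          simpa using ((hasDerivAt_id (0 : ℂ)).smul_const v).const_add z₀
        have hg : HasFDerivAt h^[k] (B ^ k) ((fun t : ℂ => z₀ + t • v) 0) := by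
          simpa using hBk k
        exact hg.comp_hasDerivAt 0 hl
      have hderiv : deriv φ 0 = (B ^ k) v := hd.deriv
      rw [hderiv, hBv k] at hSch
      have hnorm : ‖((1 : ℂ) + δ) ^ k • v‖ = (1 + δ) ^ k * ‖v‖ := by
        rw [norm_smul, norm_pow]
        have h1 : ‖(1 : ℂ) + (δ : ℂ)‖ = 1 + δ := by
          rw [show (1 : ℂ) + (δ : ℂ) = ((1 + δ : ℝ) : ℂ) by push_cast; ring,
            Complex.norm_real, Real.norm_eq_abs, abs_of_pos (by linarith)]
        rw [h1]
      rwa [hnorm] at hSch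
    obtain ⟨k, hk⟩ := pow_unbounded_of_one_lt ((R / (r / ‖v‖)) / ‖v‖)
      (by linarith : (1 : ℝ) < 1 + δ)
    have hb := bound k
    have : (R / (r / ‖v‖)) / ‖v‖ * ‖v‖ < (1 + δ) ^ k * ‖v‖ :=
      mul_lt_mul_of_pos_right hk hvpos
    rw [div_mul_cancel₀ _ hvpos.ne'] at this
    linarith
  have hinj : Function.Injective
      ⇑(ContinuousLinearMap.id ℂ (Fin n → ℂ) - A) := by
    rw [injective_iff_map_eq_zero]
    intro v hv
    apply key
    have : v - A v = 0 := by
      simpa [ContinuousLinearMap.sub_apply] using hv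
    rw [sub_eq_zero] at this
    exact this.symm
  refine ⟨hinj, ?_⟩
  have hcoe : ⇑((ContinuousLinearMap.id ℂ (Fin n → ℂ) - A : (Fin n → ℂ) →L[ℂ] (Fin n → ℂ)) :
      (Fin n → ℂ) →ₗ[ℂ] (Fin n → ℂ)) = ⇑(ContinuousLinearMap.id ℂ (Fin n → ℂ) - A) := rfl
  have := LinearMap.injective_iff_surjective
    (f := ((ContinuousLinearMap.id ℂ (Fin n → ℂ) - A : (Fin n → ℂ) →L[ℂ] (Fin n → ℂ)) :
      (Fin n → ℂ) →ₗ[ℂ] (Fin n → ℂ)))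
  rw [hcoe] at this
  exact this.mp hinj
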